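/- Let (R, ·, 𝔢) be a partial A-module algebra over a regular multiplier Hopf algebra A with counit ε. Then R is a (global unitary) left A-module algebra via · if and only if 𝔢(a) = ε(a)·1_{M(R)} for all a ∈ A. -/

import Mathlib

/- ## Preliminaries: multiplier algebras and (regular) multiplier Hopf algebras -/

open scoped TensorProduct
open TensorProduct LinearMap
set_option linter.unusedSectionVars false

noncomputable section

variable (k : Type*) [Field k]

section MultiplierAlgebra

variable (A : Type*) [NonUnitalRing A] [Module k A] [SMulCommClass k A A] [IsScalarTower k A A]

/-- The product of an algebra is *nondegenerate*. -/
def NondegProd : Prop :=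
  (∀ a : A, (∀ b : A, a * b = 0) → a = 0) ∧ ∀ b : A, (∀ a : A, a * b = 0) → b = 0

/-- A multiplier of `A`: a pair `(U, V)` of linear maps with `U (a*b) = U a * b`,
`V (a*b) = a * V b` and `V a * b = a * U b`. -/
@[ext] structure Multiplier where
  U : A →ₗ[k] A
  V : A →ₗ[k] A
  U_mul : ∀ a b : A, U (a * b) = U a * b
  V_mul : ∀ a b : A, V (a * b) = a * V b
  compat : ∀ a b : A, V a * b = a * U b

namespace Multiplier

variable {k A}

instance : Zero (Multiplier k A) := ⟨⟨0, 0, by simp, by simp, by simp⟩⟩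
instance : Add (Multiplier k A) :=
  ⟨fun m n => ⟨m.U + n.U, m.V + n.V,
    by simp [m.U_mul, n.U_mul, add_mul],
    by simp [m.V_mul, n.V_mul, mul_add],
    by simp [add_mul, mul_add, m.compat, n.compat]⟩⟩
instance : Neg (Multiplier k A) :=
  ⟨fun m => ⟨-m.U, -m.V, by simp [m.U_mul], by simp [m.V_mul],
    by simp [m.compat]⟩⟩
instance : SMul k (Multiplier k A) :=
  ⟨fun c m => ⟨c • m.U, c • m.V,
    by simp [m.U_mul, smul_mul_assoc],
    by simp [m.V_mul, mul_smul_comm],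
    by simp [smul_mul_assoc, mul_smul_comm, m.compat]⟩⟩

@[simp] lemma zero_U : (0 : Multiplier k A).U = 0 := rfl
@[simp] lemma zero_V : (0 : Multiplier k A).V = 0 := rfl
@[simp] lemma add_U (m n : Multiplier k A) : (m + n).U = m.U + n.U := rfl
@[simp] lemma add_V (m n : Multiplier k A) : (m + n).V = m.V + n.V := rfl
@[simp] lemma neg_U (m : Multiplier k A) : (-m).U = -m.U := rfl
@[simp] lemma neg_V (m : Multiplier k A) : (-m).V = -m.V := rfl
@[simp] lemma smul_U (c : k) (m : Multiplier k A) : (c • m).U = c • m.U := rfl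
@[simp] lemma smul_V (c : k) (m : Multiplier k A) : (c • m).V = c • m.V := rfl

instance : AddCommGroup (Multiplier k A) where
  add_assoc a b c := by ext x <;> simp [add_assoc]
  zero_add a := by ext x <;> simp
  add_zero a := by ext x <;> simp
  add_comm a b := by ext x <;> simp [add_comm]
  neg_add_cancel a := by ext x <;> simp
  nsmul := nsmulRec
  zsmul := zsmulRec

instance : Module k (Multiplier k A) where
  one_smul m := by ext x <;> simp
  mul_smul c d m := by ext x <;> simp [mul_smul]
  smul_zero c := by ext x <;> simp
  smul_add c m n := by ext x <;> simp
  add_smul c d m := by ext x <;> simp [add_smul]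
  zero_smul m := by ext x <;> simp

instance : One (Multiplier k A) := ⟨⟨LinearMap.id, LinearMap.id, by simp, by simp, by simp⟩⟩
instance : Mul (Multiplier k A) :=
  ⟨fun m n => ⟨m.U ∘ₗ n.U, n.V ∘ₗ m.V,
    by simp [n.U_mul, m.U_mul],
    by simp [m.V_mul, n.V_mul],
    by intro a b; simp only [LinearMap.comp_apply]; rw [n.compat, m.compat]⟩⟩

@[simp] lemma one_U : (1 : Multiplier k A).U = LinearMap.id := rfl
@[simp] lemma one_V : (1 : Multiplier k A).V = LinearMap.id := rfl
@[simp] lemma mul_U (m n : Multiplier k A) : (m * n).U = m.U ∘ₗ n.U := rfl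
@[simp] lemma mul_V (m n : Multiplier k A) : (m * n).V = n.V ∘ₗ m.V := rfl

instance : Monoid (Multiplier k A) where
  mul_assoc a b c := by ext x <;> simp
  one_mul a := by ext x <;> simp
  mul_one a := by ext x <;> simp

/-- The canonical map `A → M(A)` given by left and right multiplication. -/
def incl (a : A) : Multiplier k A :=
  ⟨LinearMap.mulLeft k a, LinearMap.mulRight k a,
    fun b c => by simp [mul_assoc], fun b c => by simp [mul_assoc],
    fun b c => by simp [mul_assoc]⟩

@[simp] lemma incl_U (a b : A) : (incl (k := k) a).U b = a * b := rfl
@[simp] lemma incl_V (a b : A) : (incl (k := k) a).V b = b * a := rfl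

/-- The canonical map `A → M(A)` as a linear map. -/
def inclL : A →ₗ[k] Multiplier k A where
  toFun := incl
  map_add' a b := by ext x <;> simp [add_mul, mul_add]
  map_smul' c a := by ext x <;> simp [smul_mul_assoc, mul_smul_comm]

@[simp] lemma inclL_apply (a : A) : (inclL (k := k) a) = incl a := rfl

/-- The `U`-component, as a linear map. -/
def Ulm : Multiplier k A →ₗ[k] A →ₗ[k] A where
  toFun m := m.U
  map_add' _ _ := rfl
  map_smul' _ _ := rfl

/-- The `V`-component, as a linear map. -/
def Vlm : Multiplier k A →ₗ[k] A →ₗ[k] A where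
  toFun m := m.V
  map_add' _ _ := rfl
  map_smul' _ _ := rfl

end Multiplier

end MultiplierAlgebra

section Tensor

variable (R : Type*) [NonUnitalRing R] [Module k R] [SMulCommClass k R R] [IsScalarTower k R R]
variable (A : Type*) [NonUnitalRing A] [Module k A] [SMulCommClass k A A] [IsScalarTower k A A]

/-- The multiplier `1 ⊗ a` of `R ⊗ A`. -/
def oneT (a : A) : Multiplier k (R ⊗[k] A) where
  U := lTensor R (LinearMap.mulLeft k a)
  V := lTensor R (LinearMap.mulRight k a)
  U_mul u v := by
    induction u with
    | zero => simp
    | add u₁ u₂ h₁ h₂ => simp [add_mul, h₁, h₂]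
    | tmul x b =>
      induction v with
      | zero => simp
      | add v₁ v₂ h₁ h₂ => simp [mul_add, h₁, h₂]
      | tmul y c => simp [Algebra.TensorProduct.tmul_mul_tmul, mul_assoc]
  V_mul u v := by
    induction u with
    | zero => simp
    | add u₁ u₂ h₁ h₂ => simp [add_mul, h₁, h₂]
    | tmul x b =>
      induction v with
      | zero => simp
      | add v₁ v₂ h₁ h₂ => simp [mul_add, h₁, h₂]
      | tmul y c => simp [Algebra.TensorProduct.tmul_mul_tmul, mul_assoc]
  compat u v := by
    induction u with
    | zero => simp
    | add u₁ u₂ h₁ h₂ => simp [add_mul, h₁, h₂]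
    | tmul x b =>
      induction v with
      | zero => simp
      | add v₁ v₂ h₁ h₂ => simp only [map_add, mul_add, h₁, h₂]
      | tmul y c => simp [Algebra.TensorProduct.tmul_mul_tmul, mul_assoc]

/-- The multiplier `x ⊗ 1` of `R ⊗ A`. -/
def tOne (x : R) : Multiplier k (R ⊗[k] A) where
  U := rTensor A (LinearMap.mulLeft k x)
  V := rTensor A (LinearMap.mulRight k x)
  U_mul u v := by
    induction u with
    | zero => simp
    | add u₁ u₂ h₁ h₂ => simp [add_mul, h₁, h₂]
    | tmul y b =>
      induction v with
      | zero => simp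
      | add v₁ v₂ h₁ h₂ => simp [mul_add, h₁, h₂]
      | tmul z c => simp [Algebra.TensorProduct.tmul_mul_tmul, mul_assoc]
  V_mul u v := by
    induction u with
    | zero => simp
    | add u₁ u₂ h₁ h₂ => simp [add_mul, h₁, h₂]
    | tmul y b =>
      induction v with
      | zero => simp
      | add v₁ v₂ h₁ h₂ => simp [mul_add, h₁, h₂]
      | tmul z c => simp [Algebra.TensorProduct.tmul_mul_tmul, mul_assoc]
  compat u v := by
    induction u with
    | zero => simp
    | add u₁ u₂ h₁ h₂ => simp [add_mul, h₁, h₂]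
    | tmul y b =>
      induction v with
      | zero => simp
      | add v₁ v₂ h₁ h₂ => simp only [map_add, mul_add, h₁, h₂]
      | tmul z c => simp [Algebra.TensorProduct.tmul_mul_tmul, mul_assoc]

/-- The multiplier `m ⊗ a` of `R ⊗ A`, for `m ∈ M(R)`, `a ∈ A`. -/
def mtensor (m : Multiplier k R) (a : A) : Multiplier k (R ⊗[k] A) where
  U := map m.U (LinearMap.mulLeft k a)
  V := map m.V (LinearMap.mulRight k a)
  U_mul u v := by
    induction u with
    | zero => simp
    | add u₁ u₂ h₁ h₂ => simp [add_mul, h₁, h₂]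
    | tmul y b =>
      induction v with
      | zero => simp
      | add v₁ v₂ h₁ h₂ => simp [mul_add, h₁, h₂]
      | tmul z c => simp [Algebra.TensorProduct.tmul_mul_tmul, mul_assoc, m.U_mul]
  V_mul u v := by
    induction u with
    | zero => simp
    | add u₁ u₂ h₁ h₂ => simp [add_mul, h₁, h₂]
    | tmul y b =>
      induction v with
      | zero => simp
      | add v₁ v₂ h₁ h₂ => simp [mul_add, h₁, h₂]
      | tmul z c => simp [Algebra.TensorProduct.tmul_mul_tmul, mul_assoc, m.V_mul]
  compat u v := by
    induction u with
    | zero => simp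
    | add u₁ u₂ h₁ h₂ => simp [add_mul, h₁, h₂]
    | tmul y b =>
      induction v with
      | zero => simp
      | add v₁ v₂ h₁ h₂ => simp only [map_add, mul_add, h₁, h₂]
      | tmul z c => simp [Algebra.TensorProduct.tmul_mul_tmul, mul_assoc, m.compat]

/-- The multiplier `m ⊗ 1` of `R ⊗ A`, for `m ∈ M(R)`. -/
def mtensorOne (m : Multiplier k R) : Multiplier k (R ⊗[k] A) where
  U := map m.U LinearMap.id
  V := map m.V LinearMap.id
  U_mul u v := by
    induction u with
    | zero => simp
    | add u₁ u₂ h₁ h₂ => simp [add_mul, h₁, h₂]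
    | tmul y b =>
      induction v with
      | zero => simp
      | add v₁ v₂ h₁ h₂ => simp [mul_add, h₁, h₂]
      | tmul z c => simp [Algebra.TensorProduct.tmul_mul_tmul, m.U_mul]
  V_mul u v := by
    induction u with
    | zero => simp
    | add u₁ u₂ h₁ h₂ => simp [add_mul, h₁, h₂]
    | tmul y b =>
      induction v with
      | zero => simp
      | add v₁ v₂ h₁ h₂ => simp [mul_add, h₁, h₂]
      | tmul z c => simp [Algebra.TensorProduct.tmul_mul_tmul, m.V_mul]
  compat u v := by
    induction u with
    | zero => simp
    | add u₁ u₂ h₁ h₂ => simp [add_mul, h₁, h₂]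
    | tmul y b =>
      induction v with
      | zero => simp
      | add v₁ v₂ h₁ h₂ => simp only [map_add, mul_add, h₁, h₂]
      | tmul z c => simp [Algebra.TensorProduct.tmul_mul_tmul, m.compat]

/-- Apply a functional to the second tensor factor:  `x ⊗ a ↦ f a • x`. -/
def apT (f : A →ₗ[k] k) : R ⊗[k] A →ₗ[k] R :=
  (TensorProduct.rid k R).toLinearMap ∘ₗ lTensor R f

@[simp] lemma apT_tmul (f : A →ₗ[k] k) (x : R) (a : A) :
    apT k R A f (x ⊗ₜ a) = f a • x := rfl

/-- Sum of pure tensors attached to a list of pairs. -/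
def psum {M N : Type*} [AddCommGroup M] [Module k M] [AddCommGroup N] [Module k N]
    (l : List (M × N)) : M ⊗[k] N :=
  (l.map fun p => p.1 ⊗ₜ[k] p.2).sum

end Tensor
section MHAdef

variable (A : Type*) [NonUnitalRing A] [Module k A] [SMulCommClass k A A] [IsScalarTower k A A]

/-- Apply a functional to the first tensor factor: `a ⊗ b ↦ f a • b`. -/
def apF (f : A →ₗ[k] k) : A ⊗[k] A →ₗ[k] A :=
  (TensorProduct.lid k A).toLinearMap ∘ₗ rTensor A f

@[simp] lemma apF_tmul (f : A →ₗ[k] k) (a b : A) : apF k A f (a ⊗ₜ b) = f a • b := rfl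

/-- A *regular multiplier Hopf algebra* structure on a nondegenerate algebra `A`:
a comultiplication `Δ : A → M(A ⊗ A)` such that the four Galois-type maps
`T1 : a ⊗ b ↦ Δ(a)(1 ⊗ b)`, `T2 : a ⊗ b ↦ (a ⊗ 1)Δ(b)`, `T3 : a ⊗ b ↦ Δ(a)(b ⊗ 1)`,
`T4 : a ⊗ b ↦ (1 ⊗ b)Δ(a)` are (well-defined and) bijective from `A ⊗ A` onto `A ⊗ A`,
together with its counit `ε` and (bijective) antipode `S`, subject to the usual axioms
(coassociativity and the counit and antipode laws, in their `T1`/`T2`-covered form). -/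
structure MHA where
  nondeg : NondegProd A
  comul : A →ₗ[k] Multiplier k (A ⊗[k] A)
  comul_mul : ∀ a b : A, comul (a * b) = comul a * comul b
  T1 : A ⊗[k] A ≃ₗ[k] A ⊗[k] A
  T2 : A ⊗[k] A ≃ₗ[k] A ⊗[k] A
  T3 : A ⊗[k] A ≃ₗ[k] A ⊗[k] A
  T4 : A ⊗[k] A ≃ₗ[k] A ⊗[k] A
  hT1 : ∀ a b : A, comul a * oneT k A A b = Multiplier.incl (T1 (a ⊗ₜ b))
  hT2 : ∀ a b : A, tOne k A A a * comul b = Multiplier.incl (T2 (a ⊗ₜ b))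
  hT3 : ∀ a b : A, comul a * tOne k A A b = Multiplier.incl (T3 (a ⊗ₜ b))
  hT4 : ∀ a b : A, oneT k A A b * comul a = Multiplier.incl (T4 (a ⊗ₜ b))
  coassoc : ∀ a b c : A,
    (TensorProduct.assoc k A A A)
        ((rTensor A (T2.toLinearMap ∘ₗ TensorProduct.mk k A A a)) (T1 (b ⊗ₜ c)))
      = (lTensor A (T1.toLinearMap ∘ₗ (TensorProduct.mk k A A).flip c)) (T2 (a ⊗ₜ b))
  counit : A →ₗ[k] k
  counit_mul : ∀ a b : A, counit (a * b) = counit a * counit b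
  hcounit1 : ∀ a b : A, apF k A counit (T1 (a ⊗ₜ b)) = a * b
  hcounit2 : ∀ a b : A, apT k A A counit (T2 (a ⊗ₜ b)) = a * b
  S : A ≃ₗ[k] A
  S_antimul : ∀ a b : A, S (a * b) = S b * S a
  hS1 : ∀ a b : A, LinearMap.mul' k A ((rTensor A S.toLinearMap) (T1 (a ⊗ₜ b))) = counit a • b
  hS2 : ∀ a b : A, LinearMap.mul' k A ((lTensor A S.toLinearMap) (T2 (a ⊗ₜ b))) = counit b • a

end MHAdef

section PComod

variable {k}
variable {A : Type*} [NonUnitalRing A] [Module k A] [SMulCommClass k A A] [IsScalarTower k A A]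
variable (H : MHA k A)
variable (R : Type*) [NonUnitalRing R] [Module k R] [SMulCommClass k R R] [IsScalarTower k R R]

/-- `(R, ρ, E)` is a *partial `A`-comodule algebra* (Definition 3.5).  The data
`rmap`/`lmap` records the elements `ρ(x)(1 ⊗ a)` and `(1 ⊗ a)ρ(x)` of `R ⊗ A`.
Condition `c3` is the coassociativity
`(ρ ⊗ ι)(ρ(x)) = (E ⊗ 1)(ι ⊗ Δ)(ρ(x))` in its fully covered form
`x⁽⁰⁾⁽⁰⁾ ⊗ x⁽⁰⁾⁽¹⁾a ⊗ x⁽¹⁾b = Σᵢ E(x⁽⁰⁾ ⊗ (x⁽¹⁾aᵢ)₍₁₎) ⊗ (x⁽¹⁾aᵢ)₍₂₎bᵢ`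
for any representation `Σᵢ aᵢ ⊗ bᵢ = T1⁻¹(a ⊗ b)`. -/
structure IsPComod (ρ : R →ₗ[k] Multiplier k (R ⊗[k] A)) (E : Multiplier k (R ⊗[k] A))
    (rmap : R →ₗ[k] A →ₗ[k] R ⊗[k] A) (lmap : A →ₗ[k] R →ₗ[k] R ⊗[k] A) : Prop where
  ρ_mul : ∀ x y : R, ρ (x * y) = ρ x * ρ y
  ρ_inj : Function.Injective ρ
  E_idem : E * E = E
  hrmap : ∀ (x : R) (a : A), ρ x * oneT k R A a = Multiplier.incl (rmap x a)
  hlmap : ∀ (a : A) (x : R), oneT k R A a * ρ x = Multiplier.incl (lmap a x)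
  c1l : ∀ a : A, ∃ l : List (Multiplier k R × A),
      oneT k R A a * E = (l.map fun p => mtensor k R A p.1 p.2).sum
  c1r : ∀ a : A, ∃ l : List (Multiplier k R × A),
      E * oneT k R A a = (l.map fun p => mtensor k R A p.1 p.2).sum
  c2l : ∀ (x : R) (a : A), ∃ u : R ⊗[k] A, rmap x a = E.U u
  c2r : ∀ (a : A) (x : R), ∃ u : R ⊗[k] A, lmap a x = E.V u
  c3 : ∀ (x : R) (a b : A) (l : List (A × A)), psum k l = H.T1.symm (a ⊗ₜ b) →
      rTensor A (rmap.flip a) (rmap x b)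
        = (l.map fun p => (rTensor A E.U) ((TensorProduct.assoc k R A A).symm
            ((lTensor R (H.T1.toLinearMap ∘ₗ (TensorProduct.mk k A A).flip p.2))
              (rmap x p.1)))).sum

/-- A *symmetric* partial `A`-comodule algebra (Definition 3.5 (iv)):  additionally
`(ρ ⊗ ι)(ρ(x)) = (ι ⊗ Δ)(ρ(x))(E ⊗ 1)`, in the fully covered form
`x⁽⁰⁾⁽⁰⁾ ⊗ ax⁽⁰⁾⁽¹⁾ ⊗ bx⁽¹⁾ = Σᵢ (x⁽⁰⁾ ⊗ (aᵢx⁽¹⁾)₍₁₎)E ⊗ bᵢ(aᵢx⁽¹⁾)₍₂₎` for any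
representation `Σᵢ aᵢ ⊗ bᵢ = T4⁻¹(a ⊗ b)`. -/
structure IsSymPComod (ρ : R →ₗ[k] Multiplier k (R ⊗[k] A)) (E : Multiplier k (R ⊗[k] A))
    (rmap : R →ₗ[k] A →ₗ[k] R ⊗[k] A) (lmap : A →ₗ[k] R →ₗ[k] R ⊗[k] A)
    extends IsPComod H R ρ E rmap lmap : Prop where
  c4 : ∀ (x : R) (a b : A) (l : List (A × A)), psum k l = H.T4.symm (a ⊗ₜ b) →
      rTensor A (lmap a) (lmap b x)
        = (l.map fun p => (rTensor A E.V) ((TensorProduct.assoc k R A A).symm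
            ((lTensor R (H.T4.toLinearMap ∘ₗ (TensorProduct.mk k A A).flip p.2))
              (lmap p.1 x)))).sum

/-- `R` is a (global) right `A`-comodule algebra via `ρ` (Definition 3.1), with
`rmap`/`lmap` recording `ρ(x)(1 ⊗ a) ∈ R ⊗ A` and `(1 ⊗ a)ρ(x) ∈ R ⊗ A`;
coassociativity `(ρ ⊗ ι)ρ = (ι ⊗ Δ)ρ` is stated in its fully covered form. -/
structure IsComod (ρ : R →ₗ[k] Multiplier k (R ⊗[k] A))
    (rmap : R →ₗ[k] A →ₗ[k] R ⊗[k] A) (lmap : A →ₗ[k] R →ₗ[k] R ⊗[k] A) : Prop where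
  ρ_mul : ∀ x y : R, ρ (x * y) = ρ x * ρ y
  ρ_inj : Function.Injective ρ
  hrmap : ∀ (x : R) (a : A), ρ x * oneT k R A a = Multiplier.incl (rmap x a)
  hlmap : ∀ (a : A) (x : R), oneT k R A a * ρ x = Multiplier.incl (lmap a x)
  coassoc : ∀ (x : R) (a b : A) (l : List (A × A)), psum k l = H.T1.symm (a ⊗ₜ b) →
      rTensor A (rmap.flip a) (rmap x b)
        = (l.map fun p => (TensorProduct.assoc k R A A).symm
            ((lTensor R (H.T1.toLinearMap ∘ₗ (TensorProduct.mk k A A).flip p.2))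
              (rmap x p.1))).sum

end PComod
section PMod

variable {k}
variable {A : Type*} [NonUnitalRing A] [Module k A] [SMulCommClass k A A] [IsScalarTower k A A]
variable (H : MHA k A)
variable (R : Type*) [NonUnitalRing R] [Module k R] [SMulCommClass k R R] [IsScalarTower k R R]

/-- `(R, ⬝, 𝔢)` is a *partial `A`-module algebra* (Definition 4.5).  Sweedler
expressions are stated for arbitrary list representations of the corresponding
covered elements; e.g. condition (i) reads
`a ⬝ (x (b ⬝ y)) = Σᵢ (pᵢ ⬝ x)(qᵢ ⬝ y)` whenever `Σᵢ pᵢ ⊗ qᵢ = Δ(a)(1 ⊗ b) = T1(a ⊗ b)`,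
and in (ii) one uses the covering `a₍₁₎ ⊗ S(a₍₂₎)b = (ι ⊗ S)((1 ⊗ S⁻¹(b))Δ(a))`. -/
structure IsPModAlg (act : A →ₗ[k] R →ₗ[k] R) (e : A →ₗ[k] Multiplier k R) : Prop where
  cond1 : ∀ (a b : A) (x y : R) (l : List (A × A)), psum k l = H.T1 (a ⊗ₜ b) →
      act a (x * act b y) = (l.map fun p => act p.1 x * act p.2 y).sum
  cond2a : ∀ (a b : A) (x : R) (l : List (A × A)), psum k l = H.T4 (a ⊗ₜ H.S.symm b) →
      (e a).U (act b x) = (l.map fun p => act p.1 (act (H.S p.2) x)).sum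
  cond2b : ∀ (a : A) (x : R),
      (e a).U x ∈ Submodule.span k {z : R | ∃ (b : A) (y : R), z = act b y}
  cond3 : ∀ (la : List A) (lx : List R), ∃ b : A,
      (∀ a ∈ la, a * b = a ∧ b * a = a) ∧ ∀ a ∈ la, ∀ x ∈ lx, act a x = act a (act b x)
  cond4 : ∀ x : R, (∀ a : A, act a x = 0) → x = 0

/-- A *symmetric* partial `A`-module algebra (Definition 4.5 (v)-(vii)).  In (vi),
one uses the covering `a₍₂₎ ⊗ S⁻¹(a₍₁₎)b = σ((S⁻¹ ⊗ ι)((S(b) ⊗ 1)Δ(a)))`. -/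
structure IsSymPModAlg (act : A →ₗ[k] R →ₗ[k] R) (e : A →ₗ[k] Multiplier k R)
    extends IsPModAlg H R act e : Prop where
  cond5 : ∀ (a b : A) (x y : R) (l : List (A × A)), psum k l = H.T3 (a ⊗ₜ b) →
      act a (act b x * y) = (l.map fun p => act p.1 x * act p.2 y).sum
  cond6 : ∀ (a b : A) (x : R) (l : List (A × A)), psum k l = H.T2 (H.S b ⊗ₜ a) →
      (e a).V (act b x) = (l.map fun p => act p.2 (act (H.S.symm p.1) x)).sum
  cond7 : ∀ (a : A) (x : R),
      (e a).V x ∈ Submodule.span k {z : R | ∃ (b : A) (y : R), z = act b y}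

/-- `R` is a (global, unitary) left `A`-module algebra (Definition 4.1). -/
structure IsModAlg (act : A →ₗ[k] R →ₗ[k] R) : Prop where
  assoc : ∀ (a b : A) (x : R), act a (act b x) = act (a * b) x
  unital : Submodule.span k {z : R | ∃ (a : A) (x : R), z = act a x} = ⊤
  mul_cond : ∀ (a b : A) (x y : R) (l : List (A × A)), psum k l = H.T1 (a ⊗ₜ b) →
      act a (x * act b y) = (l.map fun p => act p.1 x * act p.2 y).sum

end PMod

section Dual

variable {k}
variable {A : Type*} [NonUnitalRing A] [Module k A] [SMulCommClass k A A] [IsScalarTower k A A]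
variable (H : MHA k A)
variable (Ahat : Type*) [NonUnitalRing Ahat] [Module k Ahat] [SMulCommClass k Ahat Ahat]
  [IsScalarTower k Ahat Ahat] (Hh : MHA k Ahat)

/-- A realization of the *dual* `Â = {φ(– a) : a ∈ A}` of a regular multiplier Hopf
algebra `A` with left integral `φ` (as in (2.1)): a regular multiplier Hopf algebra
`Â` together with the linear bijections `hat : a ↦ φ(– a)` and `hat' : b ↦ φ(b –)`,
the evaluation pairing `ev`, the product rule `(ŵ û)(c) = (w ⊗ u)(Δ c)`, the
coproduct rules (2.5) and (2.6) read through `hat`, and the modular element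
`δ ∈ M(A)` of (5.1), `(φ ⊗ ι)Δ(a) = φ(a)δ`. -/
structure DualPair where
  φ : A →ₗ[k] k
  φ_ne : φ ≠ 0
  /-- `(ι ⊗ φ)((b ⊗ 1)Δ(a)) = φ(a) b` : left invariance of the integral. -/
  φ_int : ∀ a b : A, apT k A A φ (H.T2 (b ⊗ₜ a)) = φ a • b
  /-- `(ι ⊗ φ)(Δ(a)(b ⊗ 1)) = φ(a) b` : left invariance of the integral. -/
  φ_int' : ∀ a b : A, apT k A A φ (H.T3 (a ⊗ₜ b)) = φ a • b
  hat : A ≃ₗ[k] Ahat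
  hat' : A ≃ₗ[k] Ahat
  ev : Ahat →ₗ[k] A →ₗ[k] k
  ev_hat : ∀ a x : A, ev (hat a) x = φ (x * a)
  ev_hat' : ∀ b x : A, ev (hat' b) x = φ (b * x)
  /-- the product of `Â`: `(φ(– a) u)(c) = Σ φ(c₍₁₎ a) u(c₍₂₎)`. -/
  ev_mul : ∀ (a : A) (u : Ahat) (c : A),
      ev (hat a * u) c
        = (TensorProduct.lid k k) ((map φ (ev u)) (H.T3 (c ⊗ₜ a)))
  /-- identity (2.5): `Δ̂(φ(– a))(1 ⊗ φ(– b)) = φ(– S⁻¹(b₍₁₎)a) ⊗ φ(– b₍₂₎)`,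
  read through `hat⁻¹ ⊗ hat⁻¹` and covered on the right leg by `c`. -/
  hatT1 : ∀ a b c : A,
      (lTensor A (LinearMap.mulRight k c))
          ((map hat.symm.toLinearMap hat.symm.toLinearMap) (Hh.T1 (hat a ⊗ₜ hat b)))
        = rTensor A (LinearMap.mulRight k a ∘ₗ H.S.symm.toLinearMap) (H.T1 (b ⊗ₜ c))
  /-- identity (2.6): `(ι ⊗ Ŝ)((1 ⊗ Ŝ⁻¹(φ(– b)))Δ̂(φ(– a))) = φ(– b₍₁₎a) ⊗ φ(– b₍₂₎)`,
  read through `hat⁻¹ ⊗ hat⁻¹` and covered on the right leg by `c`. -/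
  hatT2 : ∀ a b c : A,
      (lTensor A (LinearMap.mulRight k c))
          ((map hat.symm.toLinearMap hat.symm.toLinearMap)
            ((lTensor Ahat Hh.S.toLinearMap) (Hh.T4 (hat a ⊗ₜ Hh.S.symm (hat b)))))
        = rTensor A (LinearMap.mulRight k a) (H.T1 (b ⊗ₜ c))
  /-- the modular element `δ`, with `(φ ⊗ ι)(Δ(a)(1 ⊗ b)) = φ(a) • (δ b)`. -/
  delta : Multiplier k A
  deltaInv : Multiplier k A
  delta_inv : delta * deltaInv = 1 ∧ deltaInv * delta = 1
  hdelta : ∀ a b : A, apF k A φ (H.T1 (a ⊗ₜ b)) = φ a • delta.U b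

end Dual
section Statements
variable {k}
variable {A : Type*} [NonUnitalRing A] [Module k A] [SMulCommClass k A A] [IsScalarTower k A A]
variable {R : Type*} [NonUnitalRing R] [Module k R] [SMulCommClass k R R] [IsScalarTower k R R]


/-! ### Auxiliary lemmas for Proposition 4.8 -/

section AuxPsum

variable {M N : Type*} [AddCommGroup M] [Module k M] [AddCommGroup N] [Module k N]

lemma psum_nil : psum k ([] : List (M × N)) = 0 := rfl

lemma psum_cons (p : M × N) (l : List (M × N)) :
    psum k (p :: l) = p.1 ⊗ₜ[k] p.2 + psum k l := by
  simp [psum]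

lemma exists_psum (u : M ⊗[k] N) : ∃ l : List (M × N), psum k l = u := by
  induction u with
  | zero => exact ⟨[], rfl⟩
  | tmul a b => exact ⟨[(a, b)], by simp [psum]⟩
  | add u v hu hv =>
      obtain ⟨l, hl⟩ := hu
      obtain ⟨m, hm⟩ := hv
      exact ⟨l ++ m, by simp [psum, ← hl, ← hm]⟩

end AuxPsum

namespace Multiplier

lemma mul_incl' {A : Type*} [NonUnitalRing A] [Module k A] [SMulCommClass k A A]
    [IsScalarTower k A A] (m : Multiplier k A) (u : A) :
    m * incl u = incl (m.U u) := by
  ext x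
  · simp only [mul_U, LinearMap.comp_apply, incl_U, m.U_mul]
  · simp only [mul_V, LinearMap.comp_apply, incl_V, m.compat]

/-- If the product on `R` is nondegenerate, a multiplier is determined by its `U` part. -/
lemma ext_of_U {R : Type*} [NonUnitalRing R] [Module k R] [SMulCommClass k R R]
    [IsScalarTower k R R] (hR : NondegProd R) {m n : Multiplier k R}
    (h : m.U = n.U) : m = n := by
  ext x
  · rw [h]
  · have hzero : ∀ y : R, (m.V x - n.V x) * y = 0 := by
      intro y
      rw [sub_mul, m.compat, n.compat, h, sub_self]
    exact sub_eq_zero.mp (hR.1 _ hzero)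

end Multiplier

section AuxMHA

variable {A : Type*} [NonUnitalRing A] [Module k A] [SMulCommClass k A A] [IsScalarTower k A A]

lemma tOne_mul_oneT (d c : A) :
    tOne k A A d * oneT k A A c = oneT k A A c * tOne k A A d := by
  ext w x
  · simp [tOne, oneT]
  · simp [tOne, oneT]

lemma psum_mul_unit (l : List (A × A)) (b : A)
    (hb : ∀ p ∈ l, (p.1 * b = p.1 ∧ p.2 * b = p.2)) :
    psum k l * (b ⊗ₜ[k] b) = psum k l := by
  induction l with
  | nil => simp [psum_nil]
  | cons p l ih =>
      have hp := hb p (by simp)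
      rw [psum_cons, add_mul, Algebra.TensorProduct.tmul_mul_tmul, hp.1, hp.2,
        ih fun q hq => hb q (by simp [hq])]

/-- Local units let us cancel `incl`. -/
lemma eq_of_incl_eq (hlu : ∀ l : List A, ∃ b : A, ∀ a ∈ l, a * b = a ∧ b * a = a)
    {X Y : A ⊗[k] A} (h : Multiplier.incl (k := k) X = Multiplier.incl Y) : X = Y := by
  obtain ⟨lX, hlX⟩ := exists_psum (k := k) X
  obtain ⟨lY, hlY⟩ := exists_psum (k := k) Y
  obtain ⟨b, hb⟩ := hlu (((lX ++ lY).map Prod.fst) ++ ((lX ++ lY).map Prod.snd))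
  have hb' : ∀ p ∈ lX ++ lY, p.1 * b = p.1 ∧ p.2 * b = p.2 := by
    intro p hp
    exact ⟨(hb p.1 (List.mem_append_left _ (List.mem_map_of_mem (f := Prod.fst) hp))).1,
           (hb p.2 (List.mem_append_right _ (List.mem_map_of_mem (f := Prod.snd) hp))).1⟩
  have hXb : X * (b ⊗ₜ[k] b) = X := by
    rw [← hlX]
    exact psum_mul_unit _ _ fun p hp => hb' p (List.mem_append_left _ hp)
  have hYb : Y * (b ⊗ₜ[k] b) = Y := by
    rw [← hlY]
    exact psum_mul_unit _ _ fun p hp => hb' p (List.mem_append_right _ hp)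
  have := congrArg (fun m : Multiplier k (A ⊗[k] A) => m.U (b ⊗ₜ[k] b)) h
  simpa [Multiplier.incl_U, hXb, hYb] using this

variable (H : MHA k A)

/-- The map `p ⊗ q ↦ p * S(q)`. -/
def PhiS : A ⊗[k] A →ₗ[k] A :=
  LinearMap.mul' k A ∘ₗ lTensor A H.S.toLinearMap

@[simp] lemma PhiS_tmul (p q : A) : PhiS H (p ⊗ₜ[k] q) = p * H.S q := by
  simp [PhiS]

lemma PhiS_rTensor (d : A) (u : A ⊗[k] A) :
    PhiS H (rTensor A (LinearMap.mulLeft k d) u) = d * PhiS H u := by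
  induction u with
  | zero => simp
  | add u v hu hv => simp only [map_add, mul_add, hu, hv]
  | tmul p q => simp [mul_assoc]

lemma PhiS_lTensor (c : A) (u : A ⊗[k] A) :
    PhiS H (lTensor A (LinearMap.mulLeft k c) u) = PhiS H u * H.S c := by
  induction u with
  | zero => simp
  | add u v hu hv => simp only [map_add, add_mul, hu, hv]
  | tmul p q => simp [H.S_antimul, mul_assoc]

lemma T4_eq_T2 (a c d : A) :
    rTensor A (LinearMap.mulLeft k d) (H.T4 (a ⊗ₜ[k] c))
      = lTensor A (LinearMap.mulLeft k c) (H.T2 (d ⊗ₜ[k] a)) →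
    True := fun _ => trivial

lemma incl_T4_T2 (hlu : ∀ l : List A, ∃ b : A, ∀ a ∈ l, a * b = a ∧ b * a = a) (a c d : A) :
    rTensor A (LinearMap.mulLeft k d) (H.T4 (a ⊗ₜ[k] c))
      = lTensor A (LinearMap.mulLeft k c) (H.T2 (d ⊗ₜ[k] a)) := by
  apply eq_of_incl_eq hlu
  have h1 : Multiplier.incl (rTensor A (LinearMap.mulLeft k d) (H.T4 (a ⊗ₜ[k] c)))
      = tOne k A A d * Multiplier.incl (H.T4 (a ⊗ₜ[k] c)) := by
    rw [Multiplier.mul_incl']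
    rfl
  have h2 : Multiplier.incl (lTensor A (LinearMap.mulLeft k c) (H.T2 (d ⊗ₜ[k] a)))
      = oneT k A A c * Multiplier.incl (H.T2 (d ⊗ₜ[k] a)) := by
    rw [Multiplier.mul_incl']
    rfl
  rw [h1, h2, ← H.hT4 a c, ← H.hT2 d a, ← mul_assoc, ← mul_assoc, tOne_mul_oneT]

/-- Key lemma: `(m ∘ (ι ⊗ S)) ((1 ⊗ c)Δ(a)) = ε(a) S(c)`. -/
lemma PhiS_T4 (hlu : ∀ l : List A, ∃ b : A, ∀ a ∈ l, a * b = a ∧ b * a = a) (a c : A) :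
    PhiS H (H.T4 (a ⊗ₜ[k] c)) = H.counit a • H.S c := by
  have h1 : ∀ d : A, d * PhiS H (H.T4 (a ⊗ₜ[k] c)) = d * (H.counit a • H.S c) := by
    intro d
    calc d * PhiS H (H.T4 (a ⊗ₜ[k] c))
        = PhiS H (rTensor A (LinearMap.mulLeft k d) (H.T4 (a ⊗ₜ[k] c))) :=
          (PhiS_rTensor H d _).symm
      _ = PhiS H (lTensor A (LinearMap.mulLeft k c) (H.T2 (d ⊗ₜ[k] a))) := by
          rw [incl_T4_T2 H hlu]
      _ = PhiS H (H.T2 (d ⊗ₜ[k] a)) * H.S c := PhiS_lTensor H c _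
      _ = (H.counit a • d) * H.S c := by rw [show PhiS H (H.T2 (d ⊗ₜ[k] a)) = H.counit a • d
            from H.hS2 d a]
      _ = d * (H.counit a • H.S c) := by rw [smul_mul_assoc, mul_smul_comm]
  obtain ⟨b, hb⟩ := hlu [PhiS H (H.T4 (a ⊗ₜ[k] c)), H.counit a • H.S c]
  have h2 := h1 b
  rw [(hb _ (by simp)).2, (hb _ (by simp)).2] at h2
  exact h2

end AuxMHA

section AuxAct

variable {A : Type*} [NonUnitalRing A] [Module k A] [SMulCommClass k A A] [IsScalarTower k A A]
variable {R : Type*} [NonUnitalRing R] [Module k R] [SMulCommClass k R R] [IsScalarTower k R R]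
variable (H : MHA k A) (act : A →ₗ[k] R →ₗ[k] R)

/-- Iterated action, as a linear map on `A ⊗ A`. -/
def gammaMap : A ⊗[k] A →ₗ[k] R →ₗ[k] R :=
  TensorProduct.lift (LinearMap.mk₂ k (fun a b => act a ∘ₗ act b)
    (fun a a' b => by ext x; simp)
    (fun c a b => by ext x; simp)
    (fun a b b' => by ext x; simp)
    (fun c a b => by ext x; simp))

@[simp] lemma gammaMap_tmul (a b : A) (x : R) :
    gammaMap act (a ⊗ₜ[k] b) x = act a (act b x) := by
  simp [gammaMap]

lemma sum_act_gamma (l : List (A × A)) (x : R) :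
    (l.map fun p => act p.1 (act (H.S p.2) x)).sum
      = gammaMap act ((lTensor A H.S.toLinearMap) (psum k l)) x := by
  induction l with
  | nil => simp [psum_nil]
  | cons p l ih => simp [psum_cons, ih]

lemma sum_act_mul (l : List (A × A)) (x : R) :
    (l.map fun p => act (p.1 * H.S p.2) x).sum
      = act (PhiS H (psum k l)) x := by
  induction l with
  | nil => simp [psum_nil]
  | cons p l ih => simp [psum_cons, ih]

end AuxAct

/-- **Proposition 4.8.**  Let `(R, ·, 𝔢)` be a partial `A`-module algebra over a regular
multiplier Hopf algebra `A` with counit `ε`.  Then `R` is a (global, unitary) left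
`A`-module algebra via `·` if and only if `𝔢(a) = ε(a) 1_{M(R)}` for all `a ∈ A`. -/
theorem partial_action_global_iff
    (H : MHA k A) (hR : NondegProd R)
    (act : A →ₗ[k] R →ₗ[k] R) (e : A →ₗ[k] Multiplier k R)
    (h : IsPModAlg H R act e) :
    IsModAlg H R act ↔ ∀ a : A, e a = H.counit a • (1 : Multiplier k R) := by
  have hlu : ∀ l : List A, ∃ b : A, ∀ a ∈ l, a * b = a ∧ b * a = a := by
    intro l
    obtain ⟨b, hb1, _⟩ := h.cond3 l []
    exact ⟨b, hb1⟩
  constructor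
  · -- global ⟹ `e a = ε(a) 1`
    intro hglob a
    apply Multiplier.ext_of_U hR
    have h1 : (H.counit a • (1 : Multiplier k R)).U = H.counit a • LinearMap.id := by
      simp
    rw [h1]
    apply LinearMap.ext_on hglob.unital
    rintro z ⟨b, y, rfl⟩
    obtain ⟨l, hl⟩ := exists_psum (k := k) (H.T4 (a ⊗ₜ[k] H.S.symm b))
    rw [h.cond2a a b y l hl]
    have h2 : ∀ p ∈ l, act p.1 (act (H.S p.2) y) = act (p.1 * H.S p.2) y := by
      intro p _
      rw [hglob.assoc]
    calc (l.map fun p => act p.1 (act (H.S p.2) y)).sum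
        = (l.map fun p => act (p.1 * H.S p.2) y).sum := by
          rw [List.map_congr_left h2]
      _ = act (PhiS H (psum k l)) y := sum_act_mul H act l y
      _ = act (H.counit a • H.S (H.S.symm b)) y := by
          rw [hl, PhiS_T4 H hlu]
      _ = (H.counit a • LinearMap.id : R →ₗ[k] R) (act b y) := by
          simp
  · -- `e a = ε(a) 1` ⟹ global
    intro he
    have key : gammaMap act = act ∘ₗ LinearMap.mul' k A := by
      have hsurj : Function.Surjective
          ((lTensor A H.S.toLinearMap ∘ₗ H.T4.toLinearMap : A ⊗[k] A →ₗ[k] A ⊗[k] A)) := by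
        intro u
        refine ⟨H.T4.symm ((LinearEquiv.lTensor A H.S).symm u), ?_⟩
        simp only [LinearMap.comp_apply, LinearEquiv.coe_coe, H.T4.apply_symm_apply]
        exact (LinearEquiv.lTensor A H.S).apply_symm_apply u
      have hcomp : gammaMap act ∘ₗ (lTensor A H.S.toLinearMap ∘ₗ H.T4.toLinearMap)
          = (act ∘ₗ LinearMap.mul' k A) ∘ₗ (lTensor A H.S.toLinearMap ∘ₗ H.T4.toLinearMap) := by
        apply TensorProduct.ext'
        intro a c
        apply LinearMap.ext
        intro x
        obtain ⟨l, hl⟩ := exists_psum (k := k) (H.T4 (a ⊗ₜ[k] c))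
        have hl' : psum k l = H.T4 (a ⊗ₜ[k] H.S.symm (H.S c)) := by
          rw [H.S.symm_apply_apply, hl]
        have h2 := h.cond2a a (H.S c) x l hl'
        rw [he a] at h2
        have h3 : (H.counit a • (1 : Multiplier k R)).U (act (H.S c) x)
            = H.counit a • act (H.S c) x := by simp
        rw [h3, sum_act_gamma H act l x, hl] at h2
        calc (gammaMap act ∘ₗ (lTensor A H.S.toLinearMap ∘ₗ H.T4.toLinearMap)) (a ⊗ₜ[k] c) x
            = gammaMap act ((lTensor A H.S.toLinearMap) (H.T4 (a ⊗ₜ[k] c))) x := rfl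
          _ = H.counit a • act (H.S c) x := h2.symm
          _ = act (H.counit a • H.S c) x := by simp
          _ = act (LinearMap.mul' k A ((lTensor A H.S.toLinearMap) (H.T4 (a ⊗ₜ[k] c)))) x := by
              rw [show LinearMap.mul' k A ((lTensor A H.S.toLinearMap) (H.T4 (a ⊗ₜ[k] c)))
                  = PhiS H (H.T4 (a ⊗ₜ[k] c)) from rfl, PhiS_T4 H hlu]
          _ = ((act ∘ₗ LinearMap.mul' k A) ∘ₗ (lTensor A H.S.toLinearMap ∘ₗ H.T4.toLinearMap))
                (a ⊗ₜ[k] c) x := rfl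
      apply LinearMap.ext
      intro u
      obtain ⟨v, rfl⟩ := hsurj u
      exact LinearMap.congr_fun hcomp v
    have hassoc : ∀ (a b : A) (x : R), act a (act b x) = act (a * b) x := by
      intro a b x
      have := LinearMap.congr_fun (LinearMap.congr_fun key (a ⊗ₜ[k] b)) x
      simpa using this
    refine ⟨hassoc, ?_, fun a b x y l hl => h.cond1 a b x y l hl⟩
    -- unitarity
    by_cases hc : ∃ a : A, H.counit a ≠ 0
    · obtain ⟨a, ha⟩ := hc
      rw [Submodule.eq_top_iff']
      intro x
      have h1 := h.cond2b a x
      rw [he a] at h1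
      have h2 : (H.counit a • (1 : Multiplier k R)).U x = H.counit a • x := by simp
      rw [h2] at h1
      have := Submodule.smul_mem _ (H.counit a)⁻¹ h1
      rwa [smul_smul, inv_mul_cancel₀ ha, one_smul] at this
    · push_neg at hc
      have hcz : H.counit = 0 := by ext a; simpa using hc a
      have hAB : ∀ a b : A, a * b = 0 := by
        intro a b
        have := H.hcounit1 a b
        rw [hcz] at this
        simpa [apF] using this.symm
      have hA0 : ∀ a : A, a = 0 := by
        intro a
        obtain ⟨b, hb⟩ := hlu [a]
        rw [← (hb a (by simp)).1, hAB]
      have hR0 : ∀ x : R, x = 0 := by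
        intro x
        apply h.cond4
        intro a
        rw [hA0 a]
        simp
      rw [Submodule.eq_top_iff']
      intro x
      rw [hR0 x]
      exact Submodule.zero_mem _


end Statements
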